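/- Let C be a regular category and let x be an object such that the poset of subobjects of x satisfies the descending chain condition and the poset of subobjects of x × x satisfies the ascending chain condition. Then there is no infinite strictly descending chain x ≻ x₁ ≻ x₂ ≻ ⋯ of proper subquotients; in particular x is not a proper subquotient of itself. -/

import Mathlib

open CategoryTheory CategoryTheory.Limits

/-- `y` is a subquotient of `x`. -/
def IsSubquotient {C : Type*} [Category C] (y x : C) : Prop :=
  ∃ (u : C) (m : u ⟶ x) (e : u ⟶ y), Mono m ∧ StrongEpi e

/-- `y` is a proper subquotient of `x`. -/
def IsProperSubquotient {C : Type*} [Category C] (y x : C) : Prop :=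
  ∃ (u : C) (m : u ⟶ x) (e : u ⟶ y),
    Mono m ∧ StrongEpi e ∧ (¬ IsIso m ∨ ¬ IsIso e)

section Aux

variable {C : Type*} [Category C]

/-- If `h ≫ a` and `a` define the same subobject, then `h` is an isomorphism. -/
private lemma isIso_of_mk_comp_eq {A B X : C} (h : B ⟶ A) (a : A ⟶ X) [Mono a] [Mono h]
    (hmk : Subobject.mk (h ≫ a) = Subobject.mk a) : IsIso h := by
  have le1 : Subobject.mk a ≤ Subobject.mk (h ≫ a) := hmk.ge
  let k : A ⟶ B := Subobject.ofMkLEMk a (h ≫ a) le1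
  have hk : k ≫ (h ≫ a) = a := Subobject.ofMkLEMk_comp le1
  have hkh : k ≫ h = 𝟙 A := by
    rw [← cancel_mono a]; simpa using hk
  have hhk : h ≫ k = 𝟙 B := by
    rw [← cancel_mono h, Category.assoc, hkh, Category.comp_id, Category.id_comp]
  exact ⟨k, hhk, hkh⟩

variable [HasFiniteLimits C]

/-- The recursively composed subquotient diagrams: `(sqU n).1` is a subobject of `f 0`
(via `(sqU n).2.1`) admitting a strong epi `(sqU n).2.2` onto `f n`. -/
private noncomputable def sqU (f v : ℕ → C) (m : ∀ n, v n ⟶ f n) (e : ∀ n, v n ⟶ f (n + 1)) :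
    ∀ n : ℕ, Σ (u : C), (u ⟶ f 0) × (u ⟶ f n)
  | 0 => ⟨f 0, 𝟙 _, 𝟙 _⟩
  | n + 1 =>
    ⟨pullback (m n) (sqU f v m e n).2.2,
     pullback.snd _ _ ≫ (sqU f v m e n).2.1,
     pullback.fst _ _ ≫ e n⟩

private lemma no_chain {C : Type*} [Category C] [HasFiniteLimits C]
    [HasStrongEpiMonoFactorisations C]
    (hstab : ∀ {X Y Z : C} (f : X ⟶ Z) (g : Y ⟶ Z),
      StrongEpi g → StrongEpi (pullback.fst f g))
    (f : ℕ → C)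
    (hdcc : WellFoundedLT (Subobject (f 0)))
    (hacc : WellFoundedGT (Subobject (f 0 ⨯ f 0)))
    (hch : ∀ n, IsProperSubquotient (f (n + 1)) (f n)) : False := by
  choose v m e hm he hp using hch
  set U := sqU f v m e with hUdef
  have hη : ∀ n, (U (n + 1)).2.1 = pullback.snd (m n) (U n).2.2 ≫ (U n).2.1 := fun n => rfl
  have hε : ∀ n, (U (n + 1)).2.2 = pullback.fst (m n) (U n).2.2 ≫ e n := fun n => rfl
  -- basic properties of the chain
  have hmono : ∀ n, Mono (U n).2.1 ∧ StrongEpi (U n).2.2 := by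
    intro n
    induction n with
    | zero =>
      constructor
      · show Mono (𝟙 (f 0)); infer_instance
      · show StrongEpi (𝟙 (f 0)); infer_instance
    | succ n ih =>
      obtain ⟨ih1, ih2⟩ := ih
      haveI := hm n; haveI := he n
      constructor
      · rw [hη n]
        haveI : Mono (pullback.snd (m n) (U n).2.2) := pullback.snd_of_mono
        exact mono_comp' this ih1
      · rw [hε n]
        haveI := hstab (m n) (U n).2.2 ih2
        exact @strongEpi_comp _ _ _ _ _ _ _ this (he n)
  -- the descending sequence of subobjects of `f 0`
  let S : ℕ → Subobject (f 0) := fun n => @Subobject.mk _ _ _ _ (U n).2.1 (hmono n).1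
  have hSstep : ∀ n, S (n + 1) ≤ S n := by
    intro n
    haveI := (hmono n).1
    haveI := (hmono (n + 1)).1
    haveI := hm n
    exact Subobject.mk_le_mk_of_comm (pullback.snd (m n) (U n).2.2) (hη n).symm
  have hSanti : Antitone S := antitone_nat_of_succ_le hSstep
  obtain ⟨N, hN⟩ :=
    (wellFoundedGT_iff_monotone_chain_condition (α := (Subobject (f 0))ᵒᵈ)).mp (by haveI := hdcc; infer_instance)
      ⟨fun n => OrderDual.toDual (S n), fun {p q} h => hSanti h⟩
  -- for `n ≥ N`, the comparison mono `ι n` is an isomorphism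
  have hiota : ∀ n, N ≤ n → IsIso (pullback.snd (m n) (U n).2.2) := by
    intro n hn
    haveI := (hmono n).1
    haveI := (hmono (n + 1)).1
    haveI := hm n
    haveI : Mono (pullback.snd (m n) (U n).2.2) := pullback.snd_of_mono
    have h1 : S (n + 1) = S n := ((hN (n + 1) (hn.trans n.le_succ)).symm.trans (hN n hn))
    exact isIso_of_mk_comp_eq (pullback.snd (m n) (U n).2.2) ((U n).2.1) h1
  -- the kernel-pair subobjects of `f 0 ⨯ f 0`, packaged opaquely
  obtain ⟨P, a, b, k, hab0, hka, hkb, hkm, hPlift⟩ :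
      ∃ (P : ℕ → C) (a b : ∀ n, P n ⟶ (U n).1) (k : ∀ n, P n ⟶ f 0 ⨯ f 0),
        (∀ n, a n ≫ (U n).2.2 = b n ≫ (U n).2.2) ∧
        (∀ n, k n ≫ prod.fst = a n ≫ (U n).2.1) ∧
        (∀ n, k n ≫ prod.snd = b n ≫ (U n).2.1) ∧
        (∀ n, Mono (k n)) ∧
        (∀ n (T : C) (g h : T ⟶ (U n).1), g ≫ (U n).2.2 = h ≫ (U n).2.2 →
          ∃ l : T ⟶ P n, l ≫ a n = g ∧ l ≫ b n = h) := by
    refine ⟨fun n => pullback (U n).2.2 (U n).2.2,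
      fun n => pullback.fst _ _, fun n => pullback.snd _ _,
      fun n => prod.lift (pullback.fst _ _ ≫ (U n).2.1) (pullback.snd _ _ ≫ (U n).2.1),
      fun n => pullback.condition, fun n => prod.lift_fst _ _, fun n => prod.lift_snd _ _,
      ?_, fun n T g h w => ⟨pullback.lift g h w, pullback.lift_fst _ _ _, pullback.lift_snd _ _ _⟩⟩
    intro n
    haveI := (hmono n).1
    constructor
    intro T g h hgh
    have hfst : g ≫ pullback.fst (U n).2.2 (U n).2.2 = h ≫ pullback.fst (U n).2.2 (U n).2.2 := by
      have := congrArg (· ≫ prod.fst) hgh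
      simp only [Category.assoc, prod.lift_fst] at this
      rwa [← Category.assoc, ← Category.assoc, cancel_mono] at this
    have hsnd : g ≫ pullback.snd (U n).2.2 (U n).2.2 = h ≫ pullback.snd (U n).2.2 (U n).2.2 := by
      have := congrArg (· ≫ prod.snd) hgh
      simp only [Category.assoc, prod.lift_snd] at this
      rwa [← Category.assoc, ← Category.assoc, cancel_mono] at this
    exact pullback.hom_ext hfst hsnd
  let K : ℕ → Subobject (f 0 ⨯ f 0) := fun n => @Subobject.mk _ _ _ _ (k n) (hkm n)
  have main : ∀ n, N ≤ n → K n ≤ K (n + 1) ∧ (K n = K (n + 1) → False) := by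
    intro n hn
    haveI := hm n; haveI := he n
    haveI := (hmono n).1; haveI := (hmono (n + 1)).1
    haveI h2 := (hmono n).2
    -- the (iso) comparison map and the induced strong epi `q`
    obtain ⟨ι, ι', q, hιι', hι'ι, hιη, hqm, hqe, hqse⟩ :
        ∃ (ι : (U (n + 1)).1 ⟶ (U n).1) (ι' : (U n).1 ⟶ (U (n + 1)).1)
          (q : (U n).1 ⟶ v n),
          ι ≫ ι' = 𝟙 _ ∧ ι' ≫ ι = 𝟙 _ ∧
          (U (n + 1)).2.1 = ι ≫ (U n).2.1 ∧
          q ≫ m n = (U n).2.2 ∧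
          q ≫ e n = ι' ≫ (U (n + 1)).2.2 ∧
          StrongEpi q := by
      haveI hI := hiota n hn
      refine ⟨pullback.snd (m n) (U n).2.2, @inv _ _ _ _ (pullback.snd (m n) (U n).2.2) hI,
        @inv _ _ _ _ (pullback.snd (m n) (U n).2.2) hI ≫ pullback.fst (m n) (U n).2.2,
        @IsIso.hom_inv_id _ _ _ _ _ hI, @IsIso.inv_hom_id _ _ _ _ _ hI, hη n, ?_, ?_, ?_⟩
      · rw [Category.assoc, pullback.condition, ← Category.assoc, @IsIso.inv_hom_id _ _ _ _ _ hI,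
          Category.id_comp]
      · rw [hε n, Category.assoc]
        rfl
      · haveI := hstab (m n) (U n).2.2 h2
        exact @strongEpi_comp _ _ _ _ _ _ _ (@strongEpi_of_isIso _ _ _ _ _ (@IsIso.inv_isIso _ _ _ _ _ hI)) this
    have hab' : a n ≫ q = b n ≫ q := by
      apply (cancel_mono (m n)).1
      rw [Category.assoc, Category.assoc, hqm]
      exact hab0 n
    -- the comparison map `P n ⟶ P (n+1)`
    have wφ : (a n ≫ ι') ≫ (U (n + 1)).2.2 = (b n ≫ ι') ≫ (U (n + 1)).2.2 :=
      calc (a n ≫ ι') ≫ (U (n + 1)).2.2 = a n ≫ q ≫ e n := by rw [hqe, Category.assoc]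
        _ = (a n ≫ q) ≫ e n := by rw [Category.assoc]
        _ = (b n ≫ q) ≫ e n := by rw [hab']
        _ = b n ≫ q ≫ e n := by rw [Category.assoc]
        _ = (b n ≫ ι') ≫ (U (n + 1)).2.2 := by rw [hqe, Category.assoc]
    obtain ⟨φ, hφa, hφb⟩ := hPlift (n + 1) _ (a n ≫ ι') (b n ≫ ι') wφ
    have hφk : φ ≫ k (n + 1) = k n := by
      apply Limits.prod.hom_ext
      · rw [Category.assoc, hka (n + 1), hka n, hιη, ← Category.assoc, hφa,
          Category.assoc, ← Category.assoc ι' ι, hι'ι, Category.id_comp]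
      · rw [Category.assoc, hkb (n + 1), hkb n, hιη, ← Category.assoc, hφb,
          Category.assoc, ← Category.assoc ι' ι, hι'ι, Category.id_comp]
    haveI := hkm n; haveI := hkm (n + 1)
    refine ⟨Subobject.mk_le_mk_of_comm φ hφk, fun heq => ?_⟩
    -- from stability of the kernel pair, `e n` is a monomorphism
    have le2 : Subobject.mk (k (n + 1)) ≤ Subobject.mk (k n) := heq.ge
    obtain ⟨ψ, hψk⟩ : ∃ ψ : P (n + 1) ⟶ P n, ψ ≫ k n = k (n + 1) :=
      ⟨Subobject.ofMkLEMk _ _ le2, Subobject.ofMkLEMk_comp le2⟩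
    have hψa : ψ ≫ a n = a (n + 1) ≫ ι := by
      apply (cancel_mono ((U n).2.1)).1
      rw [Category.assoc, ← hka n, ← Category.assoc, hψk, hka (n + 1), hιη,
        Category.assoc]
    have hψb : ψ ≫ b n = b (n + 1) ≫ ι := by
      apply (cancel_mono ((U n).2.1)).1
      rw [Category.assoc, ← hkb n, ← Category.assoc, hψk, hkb (n + 1), hιη,
        Category.assoc]
    have emono : Mono (e n) := by
      constructor
      intro T g h hgh
      obtain ⟨R, σ, r, hσse, hσr⟩ :
          ∃ (R : C) (σ : R ⟶ T) (r : R ⟶ (U n).1), StrongEpi σ ∧ σ ≫ g = r ≫ q :=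
        ⟨pullback g q, pullback.fst g q, pullback.snd g q, hstab _ _ hqse,
          pullback.condition⟩
      obtain ⟨Q, ρ, s, hρse, hρs⟩ :
          ∃ (Q : C) (ρ : Q ⟶ R) (s : Q ⟶ (U n).1), StrongEpi ρ ∧ ρ ≫ σ ≫ h = s ≫ q :=
        ⟨pullback (σ ≫ h) q, pullback.fst (σ ≫ h) q, pullback.snd (σ ≫ h) q,
          hstab _ _ hqse, pullback.condition⟩
      have hc₁q : (ρ ≫ r) ≫ q = ρ ≫ σ ≫ g :=
        calc (ρ ≫ r) ≫ q = ρ ≫ r ≫ q := by rw [Category.assoc]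
          _ = ρ ≫ σ ≫ g := by rw [← hσr]
      have wlam : ((ρ ≫ r) ≫ ι') ≫ (U (n + 1)).2.2 = (s ≫ ι') ≫ (U (n + 1)).2.2 :=
        calc ((ρ ≫ r) ≫ ι') ≫ (U (n + 1)).2.2 = (ρ ≫ r) ≫ q ≫ e n := by
              rw [hqe, Category.assoc]
          _ = ((ρ ≫ r) ≫ q) ≫ e n := by simp only [Category.assoc]
          _ = (ρ ≫ σ ≫ g) ≫ e n := by rw [hc₁q]
          _ = ρ ≫ σ ≫ g ≫ e n := by simp only [Category.assoc]
          _ = ρ ≫ σ ≫ h ≫ e n := by rw [hgh]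
          _ = (ρ ≫ σ ≫ h) ≫ e n := by simp only [Category.assoc]
          _ = (s ≫ q) ≫ e n := by rw [hρs]
          _ = s ≫ q ≫ e n := by rw [Category.assoc]
          _ = (s ≫ ι') ≫ (U (n + 1)).2.2 := by rw [hqe, Category.assoc]
      obtain ⟨lam, hlam1, hlam2⟩ := hPlift (n + 1) _ ((ρ ≫ r) ≫ ι') (s ≫ ι') wlam
      have hμa : (lam ≫ ψ) ≫ a n = ρ ≫ r := by
        rw [Category.assoc, hψa, ← Category.assoc, hlam1, Category.assoc, hι'ι,
          Category.comp_id]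
      have hμb : (lam ≫ ψ) ≫ b n = s := by
        rw [Category.assoc, hψb, ← Category.assoc, hlam2, Category.assoc, hι'ι,
          Category.comp_id]
      have hc : (ρ ≫ r) ≫ (U n).2.2 = s ≫ (U n).2.2 :=
        calc (ρ ≫ r) ≫ (U n).2.2 = (lam ≫ ψ) ≫ a n ≫ (U n).2.2 := by
              rw [← Category.assoc, hμa]
          _ = (lam ≫ ψ) ≫ b n ≫ (U n).2.2 := by rw [hab0 n]
          _ = s ≫ (U n).2.2 := by rw [← Category.assoc, hμb]
      have hcq : (ρ ≫ r) ≫ q = s ≫ q := by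
        apply (cancel_mono (m n)).1
        simp only [Category.assoc]
        rw [hqm]
        simpa only [Category.assoc] using hc
      rw [hc₁q] at hcq
      haveI := hρse.epi
      haveI := hσse.epi
      exact (cancel_epi σ).1 ((cancel_epi ρ).1 (by rw [hcq]; exact hρs.symm))
    haveI := emono
    haveI : IsIso (e n) := isIso_of_mono_of_strongEpi (e n)
    haveI : StrongEpi (m n) := by
      haveI : StrongEpi (q ≫ m n) := by rw [hqm]; exact h2
      exact strongEpi_of_strongEpi q (m n)
    haveI : IsIso (m n) := isIso_of_mono_of_strongEpi (m n)
    rcases hp n with h' | h' <;> exact h' ‹_›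
  -- stabilize the ascending sequence of kernel pairs
  have hKmono : Monotone fun j => K (N + j) := by
    apply monotone_nat_of_le_succ
    intro j
    exact (main (N + j) (Nat.le_add_right N j)).1
  obtain ⟨M, hM⟩ :=
    (wellFoundedGT_iff_monotone_chain_condition (α := Subobject (f 0 ⨯ f 0))).mp hacc
      ⟨fun j => K (N + j), hKmono⟩
  exact (main (N + M) (Nat.le_add_right N M)).2 (by simpa [← Nat.add_assoc] using hM (M + 1) M.le_succ)

end Aux

/-- In a regular category, if the subobjects of `x` satisfy the descending
chain condition and the subobjects of `x ⨯ x` satisfy the ascending chain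
condition, then there is no infinite strictly descending chain
`x ≻ x₁ ≻ x₂ ≻ ⋯` of proper subquotients; in particular `x` is not a proper
subquotient of itself. -/
theorem no_infinite_proper_subquotient_chain
    {C : Type*} [Category C] [HasFiniteLimits C] [HasStrongEpiMonoFactorisations C]
    (hstab : ∀ {X Y Z : C} (f : X ⟶ Z) (g : Y ⟶ Z),
      StrongEpi g → StrongEpi (pullback.fst f g))
    (x : C)
    (hdcc : WellFoundedLT (Subobject x))
    (hacc : WellFoundedGT (Subobject (x ⨯ x))) :
    (¬ ∃ f : ℕ → C, f 0 = x ∧ ∀ n, IsProperSubquotient (f (n + 1)) (f n)) ∧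
      ¬ IsProperSubquotient x x := by
  have key : ∀ f : ℕ → C, f 0 = x → (∀ n, IsProperSubquotient (f (n + 1)) (f n)) → False := by
    intro f h0 hch
    subst h0
    exact no_chain hstab f hdcc hacc hch
  exact ⟨fun ⟨f, h0, hch⟩ => key f h0 hch, fun hxx => key (fun _ => x) rfl (fun _ => hxx)⟩
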